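/- For any L-class L of a semigroup S, the relation H_L̄ := (H ∩ (L × L)) ∪ {(0,0)} is a congruence of the principal factor left S-act ᔆL̄ on L ∪ {0}. -/
import Mathlib


open scoped Classical

/-- Green's preorder `≤_L`: `x ≤_L y` iff `x = y` or `x = a y` for some `a`. -/
def leL {S : Type*} [Mul S] (x y : S) : Prop := x = y ∨ ∃ a : S, x = a * y

/-- Green's relation `L`. -/
def lrel {S : Type*} [Mul S] (x y : S) : Prop := leL x y ∧ leL y x

/-- Green's preorder `≤_R`: `x ≤_R y` iff `x = y` or `x = y a` for some `a`. -/
def leR {S : Type*} [Mul S] (x y : S) : Prop := x = y ∨ ∃ a : S, x = y * a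

/-- Green's relation `R`. -/
def rrel {S : Type*} [Mul S] (x y : S) : Prop := leR x y ∧ leR y x

/-- Green's relation `H = L ∩ R`. -/
def hrel {S : Type*} [Mul S] (x y : S) : Prop := lrel x y ∧ rrel x y

/-- The principal factor act on `L ∪ {0}` (with `0 = none`). -/
noncomputable def pfAct {M A : Type*} (act : M → A → A) (L : Set A) (m : M) :
    Option ↥L → Option ↥L
  | none => none
  | some x => if h : act m ↑x ∈ L then some ⟨act m ↑x, h⟩ else none

/-- The relation `H_L̄ = (H ∩ (L × L)) ∪ {(0,0)}` on `L ∪ {0}`. -/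
def HbarRel {S : Type*} [Mul S] (L : Set S) (a b : Option ↥L) : Prop :=
  (a = none ∧ b = none) ∨
    ∃ x y : ↥L, a = some x ∧ b = some y ∧ hrel (x : S) (y : S)

section Aux
variable {S : Type*} [Semigroup S]

lemma leL_refl (x : S) : leL x x := Or.inl rfl

lemma leL_trans {x y z : S} (h1 : leL x y) (h2 : leL y z) : leL x z := by
  rcases h1 with rfl | ⟨a, rfl⟩
  · exact h2
  · rcases h2 with rfl | ⟨b, rfl⟩
    · exact Or.inr ⟨a, rfl⟩
    · exact Or.inr ⟨a * b, (mul_assoc a b z).symm⟩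

lemma leR_refl (x : S) : leR x x := Or.inl rfl

lemma leR_trans {x y z : S} (h1 : leR x y) (h2 : leR y z) : leR x z := by
  rcases h1 with rfl | ⟨a, rfl⟩
  · exact h2
  · rcases h2 with rfl | ⟨b, rfl⟩
    · exact Or.inr ⟨a, rfl⟩
    · exact Or.inr ⟨b * a, mul_assoc z b a⟩

lemma lrel_refl (x : S) : lrel x x := ⟨leL_refl x, leL_refl x⟩
lemma lrel_symm {x y : S} (h : lrel x y) : lrel y x := ⟨h.2, h.1⟩
lemma lrel_trans {x y z : S} (h1 : lrel x y) (h2 : lrel y z) : lrel x z :=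
  ⟨leL_trans h1.1 h2.1, leL_trans h2.2 h1.2⟩

lemma rrel_refl (x : S) : rrel x x := ⟨leR_refl x, leR_refl x⟩
lemma rrel_symm {x y : S} (h : rrel x y) : rrel y x := ⟨h.2, h.1⟩
lemma rrel_trans {x y z : S} (h1 : rrel x y) (h2 : rrel y z) : rrel x z :=
  ⟨leR_trans h1.1 h2.1, leR_trans h2.2 h1.2⟩

lemma hrel_refl (x : S) : hrel x x := ⟨lrel_refl x, rrel_refl x⟩
lemma hrel_symm {x y : S} (h : hrel x y) : hrel y x :=
  ⟨lrel_symm h.1, rrel_symm h.2⟩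
lemma hrel_trans {x y z : S} (h1 : hrel x y) (h2 : hrel y z) : hrel x z :=
  ⟨lrel_trans h1.1 h2.1, rrel_trans h1.2 h2.2⟩

/-- Key lemma: if `x H y`, both in the L-class of `u`, and `s*x` is in the
L-class, then so is `s*y`, and `s*x H s*y`. -/
lemma key {u s x y : S} (hx : lrel u x) (hy : lrel u y) (hxy : hrel x y)
    (hsx : lrel u (s * x)) : lrel u (s * y) ∧ hrel (s * x) (s * y) := by
  -- leL x (s*x)
  have hxsx : leL x (s * x) := (lrel_trans (lrel_symm hx) hsx).1
  -- leR y x : y = x ∨ y = x * a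
  rcases hxy.2.2 with hyx | ⟨a, hyx⟩
  · subst hyx
    exact ⟨hsx, hrel_refl _⟩
  · -- y = x * a, so s*y = (s*x)*a
    have hsy : s * y = (s * x) * a := by rw [hyx, mul_assoc]
    -- leL y (s*y)
    have hy_sy : leL y (s * y) := by
      rcases hxsx with hxe | ⟨c, hc⟩
      · exact Or.inl (by rw [hsy, ← hxe, ← hyx])
      · exact Or.inr ⟨c, by rw [hsy, ← mul_assoc, ← hc, ← hyx]⟩
    have hlsy : lrel u (s * y) :=
      lrel_trans hy ⟨hy_sy, Or.inr ⟨s, rfl⟩⟩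
    refine ⟨hlsy, ⟨lrel_trans (lrel_symm hsx) hlsy, ?_, ?_⟩⟩
    · -- leR (s*x) (s*y) from leR x y
      rcases hxy.2.1 with hxe | ⟨b, hb⟩
      · exact Or.inl (by rw [hxe])
      · exact Or.inr ⟨b, by rw [hb, ← mul_assoc]⟩
    · exact Or.inr ⟨a, hsy⟩

end Aux

/-- For any `L`-class `L` (of an element `u`) of a semigroup `S`, the relation
`H_L̄ := (H ∩ (L × L)) ∪ {(0,0)}` is a congruence of the principal factor left
`S`-act on `L ∪ {0}`: an equivalence relation compatible with the action. -/
theorem HbarRel_is_act_congruence {S : Type*} [Semigroup S] (u : S) :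
    Equivalence (HbarRel {z | lrel u z}) ∧
    ∀ (s : S) (a b : Option ↥{z | lrel u z}),
      HbarRel {z | lrel u z} a b →
        HbarRel {z | lrel u z}
          (pfAct (fun s y => s * y) {z | lrel u z} s a)
          (pfAct (fun s y => s * y) {z | lrel u z} s b) := by
  set L := {z | lrel u z} with hL
  constructor
  · constructor
    · rintro (_ | x)
      · exact Or.inl ⟨rfl, rfl⟩
      · exact Or.inr ⟨x, x, rfl, rfl, hrel_refl _⟩
    · rintro a b (⟨rfl, rfl⟩ | ⟨x, y, rfl, rfl, h⟩)
      · exact Or.inl ⟨rfl, rfl⟩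
      · exact Or.inr ⟨y, x, rfl, rfl, hrel_symm h⟩
    · rintro a b c (⟨rfl, rfl⟩ | ⟨x, y, rfl, rfl, h1⟩)
      · exact id
      · rintro (⟨h, -⟩ | ⟨y', z, hy', rfl, h2⟩)
        · exact absurd h (by simp)
        · obtain rfl : y = y' := by injection hy'
          exact Or.inr ⟨x, z, rfl, rfl, hrel_trans h1 h2⟩
  · rintro s a b (⟨rfl, rfl⟩ | ⟨x, y, rfl, rfl, hxy⟩)
    · exact Or.inl ⟨rfl, rfl⟩
    · simp only [pfAct]
      by_cases h1 : s * (x : S) ∈ L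
      · have hk := key x.2 y.2 hxy h1
        have h2 : s * (y : S) ∈ L := hk.1
        rw [dif_pos h1, dif_pos h2]
        exact Or.inr ⟨⟨_, h1⟩, ⟨_, h2⟩, rfl, rfl, hk.2⟩
      · have h2 : s * (y : S) ∉ L := fun h2 =>
          h1 (key y.2 x.2 (hrel_symm hxy) h2).1
        rw [dif_neg h1, dif_neg h2]
        exact Or.inl ⟨rfl, rfl⟩
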